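/- Let H(ζ) = √2 ζ^{−(2k−1)} ((ζ+2+ζ^{−1})/4)^k P_k(−(ζ−2+ζ^{−1})/4) be the z-transform of the Deslauriers–Dubuc filter of order 2k, where P_k(x) = Σ_{j=0}^{k−1} binom(k−1+j, j) x^j, and define H₁(z) = z^{−k+1}/√2 and H₀(z²) = H(z) − z^{−(2k−1)}/√2. Then for all z ∈ 𝕋: 0 ≤ z^{2k−1} H(z) ≤ √2, |H₀(z)| ≤ 1/√2, and 2 − |H₀(z)|² − |H₁(z)|² ≥ 1 > 0. -/

import Mathlib

open Complex

noncomputable def ddS (k : ℕ) (x : ℝ) : ℝ :=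
  ∑ j ∈ Finset.range k, (Nat.choose (k - 1 + j) j : ℝ) * x ^ j

lemma ddS_nonneg (k : ℕ) {x : ℝ} (hx : 0 ≤ x) : 0 ≤ ddS k x := by
  unfold ddS
  apply Finset.sum_nonneg
  intro j _
  positivity

lemma ddS_step (m : ℕ) (x : ℝ) :
    (1 - x) * ddS (m + 2) x =
      ddS (m + 1) x + (Nat.choose (2 * m + 1) (m + 1) : ℝ) * x ^ (m + 1)
        - (Nat.choose (2 * m + 2) (m + 1) : ℝ) * x ^ (m + 2) := by
  set A : ℝ := ∑ i ∈ Finset.range (m + 1), (Nat.choose (m + 1 + i) i : ℝ) * x ^ (i + 1) with hA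
  set B : ℝ := ∑ i ∈ Finset.range (m + 1), (Nat.choose (m + 1 + i) (i + 1) : ℝ) * x ^ (i + 1) with hB
  have f1 : ddS (m + 2) x = 1 + (A + B) := by
    unfold ddS
    rw [Finset.sum_range_succ']
    simp only [show m + 2 - 1 = m + 1 from rfl, pow_zero, Nat.add_zero, mul_one,
      Nat.choose_zero_right, Nat.cast_one]
    rw [hA, hB, ← Finset.sum_add_distrib]
    rw [add_comm]
    congr 1
    apply Finset.sum_congr rfl
    intro i _
    rw [show m + 1 + (i + 1) = (m + 1 + i) + 1 by ring, Nat.choose_succ_succ]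
    push_cast
    ring
  have f2 : A = x * ddS (m + 2) x - (Nat.choose (2 * m + 2) (m + 1) : ℝ) * x ^ (m + 2) := by
    have : ddS (m + 2) x = (∑ i ∈ Finset.range (m + 1), (Nat.choose (m + 1 + i) i : ℝ) * x ^ i)
        + (Nat.choose (2 * m + 2) (m + 1) : ℝ) * x ^ (m + 1) := by
      unfold ddS
      simp only [show m + 2 - 1 = m + 1 from rfl]
      rw [Finset.sum_range_succ, show m + 1 + (m + 1) = 2 * m + 2 by ring]
    rw [this, mul_add, Finset.mul_sum]
    have : ∀ i ∈ Finset.range (m+1), x * ((Nat.choose (m + 1 + i) i : ℝ) * x ^ i)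
        = (Nat.choose (m + 1 + i) i : ℝ) * x ^ (i + 1) := by
      intro i _; ring
    rw [Finset.sum_congr rfl this, hA]
    ring
  have f3 : B = ddS (m + 1) x - 1 + (Nat.choose (2 * m + 1) (m + 1) : ℝ) * x ^ (m + 1) := by
    have h1 : ddS (m + 1) x = 1 + ∑ i ∈ Finset.range m, (Nat.choose (m + 1 + i) (i + 1) : ℝ) * x ^ (i + 1) := by
      unfold ddS
      rw [Finset.sum_range_succ']
      simp only [show m + 1 - 1 = m from rfl, pow_zero, Nat.add_zero, mul_one,
        Nat.choose_zero_right, Nat.cast_one]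
      rw [add_comm]
      congr 1
      apply Finset.sum_congr rfl
      intro i _
      rw [show m + (i + 1) = m + 1 + i by omega]
    rw [hB, Finset.sum_range_succ, h1]
    have : m + 1 + m = 2 * m + 1 := by omega
    rw [this]
    ring
  linarith [f1, f2, f3]

lemma ddS_one (x : ℝ) : ddS 1 x = 1 := by
  simp [ddS]

lemma ddS_identity (m : ℕ) (x : ℝ) :
    (1 - x) ^ (m + 1) * ddS (m + 1) x + x ^ (m + 1) * ddS (m + 1) (1 - x) = 1 := by
  induction m with
  | zero => rw [ddS_one, ddS_one]; ring
  | succ m ih =>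
    have s1 := ddS_step m x
    have s2 := ddS_step m (1 - x)
    rw [show (1 : ℝ) - (1 - x) = x by ring] at s2
    have hc : (Nat.choose (2 * m + 2) (m + 1) : ℝ) = 2 * (Nat.choose (2 * m + 1) (m + 1) : ℝ) := by
      have h1 : Nat.choose (2 * m + 2) (m + 1) = Nat.choose (2 * m + 1) m + Nat.choose (2 * m + 1) (m + 1) :=
        Nat.choose_succ_succ (2 * m + 1) m
      have h2 : Nat.choose (2 * m + 1) m = Nat.choose (2 * m + 1) (m + 1) := by
        have := Nat.choose_symm (show m + 1 ≤ 2 * m + 1 by omega)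
        rwa [show 2 * m + 1 - (m + 1) = m by omega] at this
      rw [h1, h2]; push_cast; ring
    have e1 : (1 - x) ^ (m + 2) * ddS (m + 2) x = (1 - x) ^ (m + 1) * ((1 - x) * ddS (m + 2) x) := by ring
    have e2 : x ^ (m + 2) * ddS (m + 2) (1 - x) = x ^ (m + 1) * (x * ddS (m + 2) (1 - x)) := by ring
    rw [e1, e2, s1, s2]
    linear_combination ih - x ^ (m + 1) * (1 - x) ^ (m + 1) * hc

/-- The z-transform of the Deslauriers–Dubuc filter of order `2k`:
`H(ζ) = √2 ζ^{−(2k−1)} ((ζ+2+ζ⁻¹)/4)^k P_k(−(ζ−2+ζ⁻¹)/4)`, where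
`P_k(x) = Σ_{j=0}^{k−1} C(k−1+j, j) x^j`. -/
noncomputable def ddH (k : ℕ) (z : ℂ) : ℂ :=
  (Real.sqrt 2 : ℂ) * z ^ (-(2 * (k : ℤ) - 1)) * ((z + 2 + z⁻¹) / 4) ^ k *
    ∑ j ∈ Finset.range k, (Nat.choose (k - 1 + j) j : ℂ) * (-(z - 2 + z⁻¹) / 4) ^ j

/-- for the Deslauriers–Dubuc filter of order `2k`, with
`H₁(z) = z^{−k+1}/√2` and `H₀(z²) = H(z) − z^{−(2k−1)}/√2`, for all `z ∈ 𝕋`: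
`z^{2k−1}H(z)` is real with `0 ≤ z^{2k−1}H(z) ≤ √2`, `|H₀(z²)| ≤ 1/√2`, and
`2 − |H₀(z²)|² − |H₁(z²)|² ≥ 1 > 0`. -/
theorem dd_bounds (k : ℕ) (hk : 1 ≤ k) (z : ℂ) (hz : ‖z‖ = 1) :
    (z ^ (2 * k - 1) * ddH k z).im = 0 ∧
    0 ≤ (z ^ (2 * k - 1) * ddH k z).re ∧
    (z ^ (2 * k - 1) * ddH k z).re ≤ Real.sqrt 2 ∧
    ‖ddH k z - z ^ (-(2 * (k : ℤ) - 1)) / (Real.sqrt 2 : ℂ)‖ ≤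
      1 / Real.sqrt 2 ∧
    1 ≤ 2 - Complex.normSq (ddH k z - z ^ (-(2 * (k : ℤ) - 1)) / (Real.sqrt 2 : ℂ)) -
        Complex.normSq ((z ^ 2) ^ (-(k : ℤ) + 1) / (Real.sqrt 2 : ℂ)) ∧
    0 < 2 - Complex.normSq (ddH k z - z ^ (-(2 * (k : ℤ) - 1)) / (Real.sqrt 2 : ℂ)) -
        Complex.normSq ((z ^ 2) ^ (-(k : ℤ) + 1) / (Real.sqrt 2 : ℂ)) := by
  have hz0 : z ≠ 0 := by
    intro h; rw [h] at hz; simp at hz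
  have habs : ‖z‖ = 1 := hz
  have hconj : z⁻¹ = starRingEnd ℂ z := Complex.inv_eq_conj habs
  set r : ℝ := z.re with hr
  have hre : |r| ≤ 1 := by
    have := Complex.abs_re_le_norm z
    rwa [habs] at this
  obtain ⟨hrm, hrM⟩ := abs_le.mp hre
  have hc : (z + 2 + z⁻¹) / 4 = (((1 + r) / 2 : ℝ) : ℂ) := by
    rw [hconj, show z + 2 + starRingEnd ℂ z = (z + starRingEnd ℂ z) + 2 by ring,
      Complex.add_conj]
    push_cast
    ring
  have hs : -(z - 2 + z⁻¹) / 4 = (((1 - r) / 2 : ℝ) : ℂ) := by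
    rw [hconj, show z - 2 + starRingEnd ℂ z = (z + starRingEnd ℂ z) - 2 by ring,
      Complex.add_conj]
    push_cast
    ring
  set a : ℝ := Real.sqrt 2 * ((1 + r) / 2) ^ k * ddS k ((1 - r) / 2) with ha
  have hsum : ∑ j ∈ Finset.range k, (Nat.choose (k - 1 + j) j : ℂ) * ((((1 - r) / 2 : ℝ)) : ℂ) ^ j
      = ((ddS k ((1 - r) / 2) : ℝ) : ℂ) := by
    unfold ddS
    push_cast
    rfl
  have hzp : z ^ (2 * k - 1) * z ^ (-(2 * (k : ℤ) - 1)) = 1 := by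
    rw [← zpow_natCast z (2 * k - 1), ← zpow_add₀ hz0,
      show ((2 * k - 1 : ℕ) : ℤ) + (-(2 * (k : ℤ) - 1)) = 0 by omega, zpow_zero]
  have key : z ^ (2 * k - 1) * ddH k z = (a : ℂ) := by
    unfold ddH
    rw [hc, hs, hsum]
    rw [show z ^ (2 * k - 1) * ((Real.sqrt 2 : ℂ) * z ^ (-(2 * (k : ℤ) - 1)) *
        ((((1 + r) / 2 : ℝ)) : ℂ) ^ k * ((ddS k ((1 - r) / 2) : ℝ) : ℂ))
      = (z ^ (2 * k - 1) * z ^ (-(2 * (k : ℤ) - 1))) * ((Real.sqrt 2 : ℂ) *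
        ((((1 + r) / 2 : ℝ)) : ℂ) ^ k * ((ddS k ((1 - r) / 2) : ℝ) : ℂ)) by ring, hzp, one_mul, ha]
    push_cast
    ring
  -- bounds on a
  have hcnn : (0 : ℝ) ≤ (1 + r) / 2 := by linarith
  have hsnn : (0 : ℝ) ≤ (1 - r) / 2 := by linarith
  have ha0 : 0 ≤ a := by
    rw [ha]
    have := ddS_nonneg k hsnn
    positivity
  have hs2 : (0 : ℝ) < Real.sqrt 2 := by positivity
  have hsq : Real.sqrt 2 * Real.sqrt 2 = 2 := Real.mul_self_sqrt (by norm_num)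
  have ha2 : a ≤ Real.sqrt 2 := by
    obtain ⟨m, rfl⟩ : ∃ m, k = m + 1 := ⟨k - 1, by omega⟩
    have hid := ddS_identity m ((1 - r) / 2)
    rw [show (1 : ℝ) - (1 - r) / 2 = (1 + r) / 2 by ring] at hid
    have h2 : 0 ≤ ((1 - r) / 2) ^ (m + 1) * ddS (m + 1) ((1 + r) / 2) := by
      have := ddS_nonneg (m + 1) hcnn
      positivity
    have ht : ((1 + r) / 2) ^ (m + 1) * ddS (m + 1) ((1 - r) / 2) ≤ 1 := by linarith
    have ht0 : 0 ≤ ((1 + r) / 2) ^ (m + 1) * ddS (m + 1) ((1 - r) / 2) := by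
      have := ddS_nonneg (m + 1) hsnn
      positivity
    rw [ha]
    nlinarith [hs2.le]
  -- H0 analysis
  have hinv : ddH k z = z ^ (-(2 * (k : ℤ) - 1)) * (a : ℂ) := by
    have h2 : z ^ (-(2 * (k : ℤ) - 1)) * (z ^ (2 * k - 1) * ddH k z)
        = z ^ (-(2 * (k : ℤ) - 1)) * (a : ℂ) := by rw [key]
    calc ddH k z = (z ^ (2 * k - 1) * z ^ (-(2 * (k : ℤ) - 1))) * ddH k z := by
          rw [hzp, one_mul]
      _ = z ^ (-(2 * (k : ℤ) - 1)) * (z ^ (2 * k - 1) * ddH k z) := by ring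
      _ = z ^ (-(2 * (k : ℤ) - 1)) * (a : ℂ) := h2
  have hsc0 : (Real.sqrt 2 : ℂ) ≠ 0 := by
    exact_mod_cast Complex.ofReal_ne_zero.mpr hs2.ne'
  have hH0 : ddH k z - z ^ (-(2 * (k : ℤ) - 1)) / (Real.sqrt 2 : ℂ)
      = z ^ (-(2 * (k : ℤ) - 1)) * (((a - 1 / Real.sqrt 2 : ℝ)) : ℂ) := by
    rw [hinv]
    push_cast
    field_simp
  have habs0 : ‖ddH k z - z ^ (-(2 * (k : ℤ) - 1)) / (Real.sqrt 2 : ℂ)‖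
      = |a - 1 / Real.sqrt 2| := by
    rw [hH0, norm_mul, norm_zpow, habs, one_zpow, one_mul, Complex.norm_real, Real.norm_eq_abs]
  have hbnd : |a - 1 / Real.sqrt 2| ≤ 1 / Real.sqrt 2 := by
    rw [abs_le]
    constructor
    · have : 0 < 1 / Real.sqrt 2 := by positivity
      linarith
    · have : Real.sqrt 2 = 2 * (1 / Real.sqrt 2) := by
        field_simp
        exact Real.sq_sqrt (by norm_num)
      linarith [ha2]
  have hhalf : (1 / Real.sqrt 2) ^ 2 = 1 / 2 := by
    rw [div_pow, one_pow, Real.sq_sqrt (by norm_num : (2:ℝ) ≥ 0)]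
  have n0 : Complex.normSq (ddH k z - z ^ (-(2 * (k : ℤ) - 1)) / (Real.sqrt 2 : ℂ)) ≤ 1 / 2 := by
    rw [← Complex.sq_norm, habs0, ← hhalf]
    exact pow_le_pow_left₀ (abs_nonneg _) hbnd 2
  have n1 : Complex.normSq ((z ^ 2) ^ (-(k : ℤ) + 1) / (Real.sqrt 2 : ℂ)) = 1 / 2 := by
    rw [← Complex.sq_norm, norm_div, norm_zpow, norm_pow, habs, one_pow, one_zpow,
      Complex.norm_real, Real.norm_eq_abs, _root_.abs_of_nonneg hs2.le, hhalf]
  refine ⟨?_, ?_, ?_, ?_, ?_, ?_⟩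
  · rw [key]; exact Complex.ofReal_im a
  · rw [key, Complex.ofReal_re]; exact ha0
  · rw [key, Complex.ofReal_re]; exact ha2
  · rw [habs0]; exact hbnd
  · linarith [n0, n1.le]
  · linarith [n0, n1.le]
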